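/- Let 0 < γ < 1. Then the second-order Lubich coefficients satisfy l_k^{2,γ} < 0 for every k ≥ 4. -/
import Mathlib


/-- Grünwald–Letnikov coefficient `g_k^α = (-1)^k * binom(α,k)`. -/
noncomputable def gl (a : ℝ) (k : ℕ) : ℝ :=
  (-1 : ℝ) ^ k * (∏ j ∈ Finset.range k, (a - j)) / (Nat.factorial k : ℝ)

/-- Shifted Grünwald weights. -/
noncomputable def glw (a : ℝ) : ℕ → ℝ
  | 0 => a / 2 * gl a 0
  | (k+1) => a / 2 * gl a (k+1) + (2 - a) / 2 * gl a k

/-- Second-order Lubich coefficients `l_m^{2,γ}`. -/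
noncomputable def lub2 (g : ℝ) (m : ℕ) : ℝ :=
  (3/2 : ℝ) ^ g * ∑ k ∈ Finset.range (m+1), (1/3 : ℝ) ^ k * gl g k * gl g (m - k)

/-- The Toeplitz matrix `B_α` of size `(M-1) × (M-1)`. -/
noncomputable def Bmat (a : ℝ) (M : ℕ) : Matrix (Fin (M-1)) (Fin (M-1)) ℝ :=
  fun i j => if (j : ℕ) ≤ (i : ℕ) + 1 then glw a ((i : ℕ) + 1 - (j : ℕ)) else 0

/-- The symmetric matrix `A_α = B_α + B_αᵀ`. -/
noncomputable def Amat (a : ℝ) (M : ℕ) : Matrix (Fin (M-1)) (Fin (M-1)) ℝ :=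
  Bmat a M + (Bmat a M).transpose

lemma gl_zero (a : ℝ) : gl a 0 = 1 := by simp [gl]

lemma gl_succ (a : ℝ) (k : ℕ) : gl a (k+1) = gl a k * ((k - a)/(k+1)) := by
  have h1 : ((k.factorial : ℝ)) ≠ 0 := by positivity
  have h2 : ((k:ℝ) + 1) ≠ 0 := by positivity
  simp only [gl, Finset.prod_range_succ, Nat.factorial_succ, pow_succ]
  push_cast
  field_simp
  ring

lemma gl_one (a : ℝ) : gl a 1 = -a := by
  rw [show (1:ℕ) = 0 + 1 from rfl, gl_succ, gl_zero]
  norm_num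

section
variable {γ : ℝ} (hγ0 : 0 < γ) (hγ1 : γ < 1)
include hγ0 hγ1

lemma gl_neg : ∀ k : ℕ, 1 ≤ k → gl γ k < 0 := by
  intro k hk
  induction k, hk using Nat.le_induction with
  | base => rw [gl_one]; linarith
  | succ n hn ih =>
    rw [gl_succ]
    have h1 : gl γ n < 0 := ih
    have h2 : (0:ℝ) < ((n:ℝ) - γ)/((n:ℝ)+1) := by
      have : (1:ℝ) ≤ (n:ℝ) := by exact_mod_cast hn
      apply div_pos <;> linarith
    exact mul_neg_of_neg_of_pos h1 h2

lemma glA (a b : ℕ) (ha : 1 ≤ a) (hb : 1 ≤ b) (hab : a ≤ b) :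
    gl γ (a+1) * gl γ b ≤ gl γ a * gl γ (b+1) := by
  rw [gl_succ γ a, gl_succ γ b]
  have hga : gl γ a < 0 := gl_neg hγ0 hγ1 a ha
  have hgb : gl γ b < 0 := gl_neg hγ0 hγ1 b hb
  have hca : (1:ℝ) ≤ (a:ℝ) := by exact_mod_cast ha
  have hcb : (1:ℝ) ≤ (b:ℝ) := by exact_mod_cast hb
  have hcab : (a:ℝ) ≤ (b:ℝ) := by exact_mod_cast hab
  have hprod : 0 < gl γ a * gl γ b := mul_pos_of_neg_of_neg hga hgb
  have key : ((a:ℝ) - γ)/((a:ℝ)+1) ≤ ((b:ℝ) - γ)/((b:ℝ)+1) := by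
    rw [div_le_div_iff₀ (by linarith) (by linarith)]
    nlinarith
  calc gl γ a * (((a:ℝ) - γ)/((a:ℝ)+1)) * gl γ b
      = (gl γ a * gl γ b) * (((a:ℝ) - γ)/((a:ℝ)+1)) := by ring
    _ ≤ (gl γ a * gl γ b) * (((b:ℝ) - γ)/((b:ℝ)+1)) := by
        apply mul_le_mul_of_nonneg_left key (le_of_lt hprod)
    _ = gl γ a * (gl γ b * (((b:ℝ) - γ)/((b:ℝ)+1))) := by ring

lemma glB : ∀ a b : ℕ, 1 ≤ b → a ≤ b → gl γ (a+1) * gl γ b ≤ gl γ 1 * gl γ (a+b) := by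
  intro a
  induction a with
  | zero => intro b hb _; simp
  | succ n ih =>
    intro b hb hab
    have h1 : gl γ (n+1+1) * gl γ b ≤ gl γ (n+1) * gl γ (b+1) :=
      glA hγ0 hγ1 (n+1) b (by omega) hb hab
    have h2 : gl γ (n+1) * gl γ (b+1) ≤ gl γ 1 * gl γ (n+(b+1)) :=
      ih (b+1) (by omega) (by omega)
    have : n + (b+1) = n + 1 + b := by omega
    rw [this] at h2
    linarith

lemma glPair (c d : ℕ) (hc : 1 ≤ c) (hd : 1 ≤ d) :
    gl γ c * gl γ d ≤ gl γ 1 * gl γ (c+d-1) := by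
  rcases le_total c d with h | h
  · have := glB hγ0 hγ1 (c-1) d hd (by omega)
    have e1 : c - 1 + 1 = c := by omega
    have e2 : c - 1 + d = c + d - 1 := by omega
    rwa [e1, e2] at this
  · have := glB hγ0 hγ1 (d-1) c hc (by omega)
    have e1 : d - 1 + 1 = d := by omega
    have e2 : d - 1 + c = c + d - 1 := by omega
    rw [e1, e2] at this
    linarith [this, mul_comm (gl γ c) (gl γ d)]

end

theorem stmt9 (γ : ℝ) (hγ0 : 0 < γ) (hγ1 : γ < 1) :
    ∀ k : ℕ, 4 ≤ k → lub2 γ k < 0 := by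
  intro m hm
  obtain ⟨n, rfl⟩ : ∃ n, m = n + 4 := ⟨m - 4, by omega⟩
  have hg3 : gl γ (n+3) < 0 := gl_neg hγ0 hγ1 _ (by omega)
  have hg4 : gl γ (n+4) < 0 := gl_neg hγ0 hγ1 _ (by omega)
  have hG : (0:ℝ) < -gl γ (n+3) := by linarith
  unfold lub2
  apply mul_neg_of_pos_of_neg
  · positivity
  set f : ℕ → ℝ := fun k => (1/3:ℝ)^k * gl γ k * gl γ (n+4-k) with hf
  have hsplit : ∑ k ∈ Finset.range (n+4+1), f k
      = ((∑ k ∈ Finset.range (n+3), f (k+1)) + f 0) + f (n+4) := by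
    rw [Finset.sum_range_succ, Finset.sum_range_succ']
  have hg1g3 : (0:ℝ) ≤ gl γ 1 * gl γ (n+3) :=
    le_of_lt (mul_pos_of_neg_of_neg (by rw [gl_one]; linarith) hg3)
  have hterm : ∀ k ∈ Finset.range (n+3),
      f (k+1) ≤ (1/3:ℝ)^(k+1) * (gl γ 1 * gl γ (n+3)) := by
    intro k hk
    simp only [Finset.mem_range] at hk
    have h1 : n + 4 - (k+1) = n + 3 - k := by omega
    have h2 : (k+1) + (n+3-k) - 1 = n + 3 := by omega
    have hp := glPair hγ0 hγ1 (k+1) (n+3-k) (by omega) (by omega)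
    rw [h2] at hp
    have he : f (k+1) = (1/3:ℝ)^(k+1) * (gl γ (k+1) * gl γ (n+3-k)) := by
      simp only [hf, h1]; ring
    rw [he]
    exact mul_le_mul_of_nonneg_left hp (by positivity)
  have hgeo : ∑ k ∈ Finset.range (n+3), (1/3:ℝ)^(k+1) ≤ 1/2 := by
    have h3 : ∑ k ∈ Finset.range (n+3), (1/3:ℝ)^k
        = ((1/3:ℝ)^(n+3) - 1)/((1/3:ℝ)-1) := geom_sum_eq (by norm_num) _
    have hp : (0:ℝ) < (1/3:ℝ)^(n+3) := by positivity
    calc ∑ k ∈ Finset.range (n+3), (1/3:ℝ)^(k+1)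
        = (∑ k ∈ Finset.range (n+3), (1/3:ℝ)^k) * (1/3) := by
          rw [Finset.sum_mul]
          exact Finset.sum_congr rfl (fun k _ => by rw [pow_succ])
      _ = (1 - (1/3:ℝ)^(n+3)) * (3/2) * (1/3) := by rw [h3]; ring
      _ ≤ 1/2 := by linarith
  have hmid : ∑ k ∈ Finset.range (n+3), f (k+1) ≤ (1/2) * (gl γ 1 * gl γ (n+3)) := by
    calc ∑ k ∈ Finset.range (n+3), f (k+1)
        ≤ ∑ k ∈ Finset.range (n+3), (1/3:ℝ)^(k+1) * (gl γ 1 * gl γ (n+3)) :=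
          Finset.sum_le_sum hterm
      _ = (∑ k ∈ Finset.range (n+3), (1/3:ℝ)^(k+1)) * (gl γ 1 * gl γ (n+3)) := by
          rw [Finset.sum_mul]
      _ ≤ (1/2) * (gl γ 1 * gl γ (n+3)) := mul_le_mul_of_nonneg_right hgeo hg1g3
  have hf0 : f 0 = gl γ (n+4) := by simp [hf, gl_zero]
  have hftop : f (n+4) < 0 := by
    have he : f (n+4) = (1/3:ℝ)^(n+4) * gl γ (n+4) := by simp [hf, gl_zero]
    rw [he]
    exact mul_neg_of_pos_of_neg (by positivity) hg4
  have hfrac : γ/2 < (((n:ℝ)+3) - γ)/(((n:ℝ)+3)+1) := by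
    rw [lt_div_iff₀ (by positivity)]
    nlinarith [mul_nonneg (by linarith : (0:ℝ) ≤ 1-γ) (by positivity : (0:ℝ) ≤ (n:ℝ))]
  have h4eq : gl γ (n+4) = gl γ (n+3) * ((((n:ℝ)+3) - γ)/(((n:ℝ)+3)+1)) := by
    have h := gl_succ γ (n+3)
    push_cast at h
    exact h
  have hmain : gl γ (n+4) + (1/2) * (gl γ 1 * gl γ (n+3)) < 0 := by
    rw [gl_one, h4eq]
    have hh := mul_lt_mul_of_pos_left hfrac hG
    nlinarith [hh]
  rw [hsplit]
  linarith [hmid, hftop, hmain, hf0]
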